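/- Let n ≥ 1 and let M, K : ℝ² → ℝ^{n×n} be continuously differentiable matrix fields (arguments (x,t)) such that M(x,t) and K(x,t) are skew-symmetric for every (x,t). Let C : ℝ² → ℝ^{n×n} be a matrix field satisfying C(x,t)ᵀ − C(x,t) = (∂M/∂t)(x,t) + (∂K/∂x)(x,t) for all (x,t). If U, V : ℝ² → ℝⁿ are differentiable and satisfy M U_t + K U_x = C U and M V_t + K V_x = C V at every point, then the multi-symplectic dissipation law holds: ∂/∂t ⟨M U, V⟩ + ∂/∂x ⟨K U, V⟩ = 0 at every point, where ⟨·,·⟩ is the standard inner product on ℝⁿ. -/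

import Mathlib

open Matrix

lemma mulVec_dot_hasDerivAt {n : ℕ} (A : ℝ → Matrix (Fin n) (Fin n) ℝ)
    (u v : ℝ → Fin n → ℝ) (t : ℝ)
    (hA : ∀ μ ν, DifferentiableAt ℝ (fun s => A s μ ν) t)
    (hu : ∀ μ, DifferentiableAt ℝ (fun s => u s μ) t)
    (hv : ∀ μ, DifferentiableAt ℝ (fun s => v s μ) t) :
    HasDerivAt (fun s => (A s *ᵥ u s) ⬝ᵥ v s)
      (((fun μ ν => deriv (fun s => A s μ ν) t) *ᵥ u t) ⬝ᵥ v t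
        + (A t *ᵥ (fun μ => deriv (fun s => u s μ) t)) ⬝ᵥ v t
        + (A t *ᵥ u t) ⬝ᵥ (fun μ => deriv (fun s => v s μ) t)) t := by
  have key : ∀ μ : Fin n, HasDerivAt (fun s => (∑ ν, A s μ ν * u s ν) * v s μ)
      ((∑ ν, (deriv (fun s => A s μ ν) t * u t ν + A t μ ν * deriv (fun s => u s ν) t)) * v t μ
        + (∑ ν, A t μ ν * u t ν) * deriv (fun s => v s μ) t) t := by
    intro μ
    exact (HasDerivAt.fun_sum fun ν _ => ((hA μ ν).hasDerivAt.mul (hu ν).hasDerivAt)).mul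
      (hv μ).hasDerivAt
  have h := HasDerivAt.fun_sum (fun μ (_ : μ ∈ Finset.univ) => key μ)
  simp only [Matrix.mulVec, dotProduct]
  refine h.congr_deriv ?_
  simp [Finset.sum_add_distrib, add_mul, Finset.sum_mul]

lemma skew_flip {n : ℕ} (A : Matrix (Fin n) (Fin n) ℝ) (hA : Aᵀ = -A)
    (u v : Fin n → ℝ) : (A *ᵥ u) ⬝ᵥ v = -((A *ᵥ v) ⬝ᵥ u) := by
  rw [dotProduct_comm, dotProduct_mulVec, ← Matrix.mulVec_transpose, hA,
    Matrix.neg_mulVec, neg_dotProduct]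

lemma trans_flip {n : ℕ} (A : Matrix (Fin n) (Fin n) ℝ)
    (u v : Fin n → ℝ) : (A *ᵥ u) ⬝ᵥ v = (Aᵀ *ᵥ v) ⬝ᵥ u := by
  rw [dotProduct_comm, dotProduct_mulVec, ← Matrix.mulVec_transpose]

/-- Let `M K : ℝ² → ℝ^{n×n}` be `C¹` skew-symmetric matrix
fields (arguments `(x,t)`), and let `C : ℝ² → ℝ^{n×n}` satisfy
`Cᵀ − C = ∂M/∂t + ∂K/∂x`. If `U V : ℝ² → ℝⁿ` are differentiable and satisfy
`M U_t + K U_x = C U` and `M V_t + K V_x = C V` everywhere, then the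
multi-symplectic dissipation law `∂_t ⟨M U, V⟩ + ∂_x ⟨K U, V⟩ = 0` holds
everywhere. -/
theorem multisymplectic_dissipation_law (n : ℕ) (hn : 1 ≤ n)
    (M K C : ℝ → ℝ → Matrix (Fin n) (Fin n) ℝ)
    (hM : ∀ μ ν : Fin n, ContDiff ℝ 1 (fun P : ℝ × ℝ => M P.1 P.2 μ ν))
    (hK : ∀ μ ν : Fin n, ContDiff ℝ 1 (fun P : ℝ × ℝ => K P.1 P.2 μ ν))
    (skewM : ∀ x t : ℝ, (M x t)ᵀ = -(M x t))
    (skewK : ∀ x t : ℝ, (K x t)ᵀ = -(K x t))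
    (hC : ∀ (x t : ℝ) (μ ν : Fin n),
      (C x t)ᵀ μ ν - C x t μ ν =
        deriv (fun s => M x s μ ν) t + deriv (fun s => K s t μ ν) x)
    (U V : ℝ × ℝ → Fin n → ℝ)
    (hU : Differentiable ℝ U) (hV : Differentiable ℝ V)
    (hUeq : ∀ x t : ℝ,
      M x t *ᵥ (fun μ => deriv (fun s => U (x, s) μ) t)
        + K x t *ᵥ (fun μ => deriv (fun s => U (s, t) μ) x) = C x t *ᵥ U (x, t))
    (hVeq : ∀ x t : ℝ,
      M x t *ᵥ (fun μ => deriv (fun s => V (x, s) μ) t)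
        + K x t *ᵥ (fun μ => deriv (fun s => V (s, t) μ) x) = C x t *ᵥ V (x, t)) :
    ∀ x t : ℝ,
      deriv (fun s => (M x s *ᵥ U (x, s)) ⬝ᵥ V (x, s)) t
        + deriv (fun s => (K s t *ᵥ U (s, t)) ⬝ᵥ V (s, t)) x = 0 := by
  intro x t
  -- line maps
  have hline_t : Differentiable ℝ (fun s : ℝ => ((x, s) : ℝ × ℝ)) :=
    (differentiable_const x).prodMk differentiable_id
  have hline_x : Differentiable ℝ (fun s : ℝ => ((s, t) : ℝ × ℝ)) :=
    differentiable_id.prodMk (differentiable_const t)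
  -- derivative in t
  have hMd : ∀ μ ν, DifferentiableAt ℝ (fun s => M x s μ ν) t := fun μ ν =>
    (((hM μ ν).differentiable one_ne_zero) (x, t)).comp t (hline_t t)
  have hKd : ∀ μ ν, DifferentiableAt ℝ (fun s => K s t μ ν) x := fun μ ν =>
    (((hK μ ν).differentiable one_ne_zero) (x, t)).comp (g := fun P : ℝ × ℝ => K P.1 P.2 μ ν) x (hline_x x)
  have hUt : ∀ μ, DifferentiableAt ℝ (fun s => U (x, s) μ) t := fun μ =>
    differentiableAt_pi.mp ((hU (x, t)).comp t (hline_t t)) μ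
  have hUx : ∀ μ, DifferentiableAt ℝ (fun s => U (s, t) μ) x := fun μ =>
    differentiableAt_pi.mp ((hU (x, t)).comp x (hline_x x)) μ
  have hVt : ∀ μ, DifferentiableAt ℝ (fun s => V (x, s) μ) t := fun μ =>
    differentiableAt_pi.mp ((hV (x, t)).comp t (hline_t t)) μ
  have hVx : ∀ μ, DifferentiableAt ℝ (fun s => V (s, t) μ) x := fun μ =>
    differentiableAt_pi.mp ((hV (x, t)).comp x (hline_x x)) μ
  have hDt := (mulVec_dot_hasDerivAt (fun s => M x s) (fun s => U (x, s))
    (fun s => V (x, s)) t hMd hUt hVt).deriv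
  have hDx := (mulVec_dot_hasDerivAt (fun s => K s t) (fun s => U (s, t))
    (fun s => V (s, t)) x hKd hUx hVx).deriv
  rw [hDt, hDx]
  set a := U (x, t) with ha
  set b := V (x, t) with hb
  set at' : Fin n → ℝ := fun μ => deriv (fun s => U (x, s) μ) t
  set ax : Fin n → ℝ := fun μ => deriv (fun s => U (s, t) μ) x
  set bt : Fin n → ℝ := fun μ => deriv (fun s => V (x, s) μ) t
  set bx : Fin n → ℝ := fun μ => deriv (fun s => V (s, t) μ) x
  set Mt : Matrix (Fin n) (Fin n) ℝ := fun μ ν => deriv (fun s => M x s μ ν) t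
  set Kx : Matrix (Fin n) (Fin n) ℝ := fun μ ν => deriv (fun s => K s t μ ν) x
  have hCmat : (C x t)ᵀ - C x t = Mt + Kx := by
    ext μ ν; exact hC x t μ ν
  have e1 : (M x t *ᵥ at') ⬝ᵥ b + (K x t *ᵥ ax) ⬝ᵥ b = (C x t *ᵥ a) ⬝ᵥ b := by
    rw [← add_dotProduct, hUeq x t]
  have e2 : (M x t *ᵥ a) ⬝ᵥ bt + (K x t *ᵥ a) ⬝ᵥ bx = -(((C x t)ᵀ *ᵥ a) ⬝ᵥ b) := by
    rw [skew_flip _ (skewM x t), skew_flip _ (skewK x t), ← neg_add,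
      ← add_dotProduct, hVeq x t, trans_flip]
  have e3 : (Mt *ᵥ a) ⬝ᵥ b + (Kx *ᵥ a) ⬝ᵥ b =
      (((C x t)ᵀ *ᵥ a) ⬝ᵥ b) - ((C x t *ᵥ a) ⬝ᵥ b) := by
    rw [← add_dotProduct, ← Matrix.add_mulVec, ← hCmat, Matrix.sub_mulVec,
      sub_dotProduct]
  linarith
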